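/- arXiv:1610.00864 — 4 statements merged into one kernel-verified Lean document; each statement's English description precedes it below -/
import Mathlib

section
/- Let $n, p$ be positive integers and for an integer $s$ with $-(p-1) \le s \le p-1$ let $B_{2p,s} = \{(i_1,\ldots,i_{2p}) \in \{1,\ldots,n\}^{2p} : \sum_{k=1}^{2p}(-1)^k i_k = sn\}$. Then the cardinality of $B_{2p,s}$ equals $\sum_{k=0}^{p+s-1}(-1)^k\binom{2p}{k}\binom{(p+s-k)n+p-1}{2p-1}$. -/
open Finset

/-- Stars and bars. -/
lemma sb_card (m T : ℕ) :
    (Finset.piAntidiag (univ : Finset (Fin m)) T).card = (T + m - 1).choose T := by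
  classical
  rw [← Finset.map_sym_eq_piAntidiag, Finset.card_map, Finset.sym_univ]
  rw [Finset.card_univ, Sym.card_sym_eq_multichoose, Fintype.card_fin, Nat.multichoose_eq]
  congr 1
  omega

lemma shift_card (m n T : ℕ) (S : Finset (Fin m)) (h : S.card * n ≤ T) :
    ((Finset.piAntidiag (univ : Finset (Fin m)) T).filter
        (fun f => ∀ i ∈ S, n ≤ f i)).card
      = (Finset.piAntidiag (univ : Finset (Fin m)) (T - S.card * n)).card := by
  classical
  have hind : ∀ (_ : True), (∑ i : Fin m, (if i ∈ S then n else 0)) = S.card * n := by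
    intro _
    rw [Finset.sum_ite_mem, Finset.univ_inter, Finset.sum_const, smul_eq_mul]
  apply Finset.card_nbij' (fun f i => f i - if i ∈ S then n else 0)
    (fun f i => f i + if i ∈ S then n else 0)
  · intro f hf
    simp only [Finset.mem_coe, Finset.mem_filter, Finset.mem_piAntidiag] at hf ⊢
    obtain ⟨⟨hsum, -⟩, hbig⟩ := hf
    refine ⟨?_, fun i _ => Finset.mem_univ i⟩
    rw [Finset.sum_tsub_distrib]
    · rw [hsum, hind trivial]
    · intro i _
      by_cases hi : i ∈ S <;> simp [hi, hbig i]
  · intro f hf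
    simp only [Finset.mem_coe, Finset.mem_filter, Finset.mem_piAntidiag] at hf ⊢
    obtain ⟨hsum, -⟩ := hf
    constructor
    · refine ⟨?_, fun i _ => Finset.mem_univ i⟩
      rw [Finset.sum_add_distrib, hsum, hind trivial]
      omega
    · intro i hi
      simp [hi]
  · intro f hf
    simp only [Finset.mem_coe, Finset.mem_filter, Finset.mem_piAntidiag] at hf
    obtain ⟨-, hbig⟩ := hf
    funext i
    by_cases hi : i ∈ S <;> simp [hi]
    exact Nat.sub_add_cancel (hbig i hi)
  · intro f _
    funext i
    by_cases hi : i ∈ S <;> simp [hi]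

lemma shift_empty (m n T : ℕ) (S : Finset (Fin m)) (h : T < S.card * n) :
    ((Finset.piAntidiag (univ : Finset (Fin m)) T).filter
        (fun f => ∀ i ∈ S, n ≤ f i)) = ∅ := by
  classical
  rw [Finset.filter_eq_empty_iff]
  rintro f hf hbig
  simp only [Finset.mem_piAntidiag] at hf
  obtain ⟨hsum, -⟩ := hf
  have h1 : S.card • n ≤ ∑ i ∈ S, f i := Finset.card_nsmul_le_sum S f n hbig
  have h2 : ∑ i ∈ S, f i ≤ T :=
    le_of_le_of_eq (Finset.sum_le_sum_of_subset (Finset.subset_univ S)) hsum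
  rw [smul_eq_mul] at h1
  omega

/-- Inclusion–exclusion count of bounded compositions. -/
lemma count_bounded (m n T : ℕ) (hm : 0 < m) :
    (((Finset.piAntidiag (univ : Finset (Fin m)) T).filter
        (fun f => ∀ i, f i < n)).card : ℤ)
      = ∑ k ∈ Finset.range (m + 1), (-1 : ℤ) ^ k * (m.choose k) *
          (if k * n ≤ T then ((T - k * n + (m - 1)).choose (m - 1) : ℤ) else 0) := by
  classical
  set A := Finset.piAntidiag (univ : Finset (Fin m)) T with hA
  have Nterm : ∀ S : Finset (Fin m),
      ((A.filter (fun f => ∀ i ∈ S, n ≤ f i)).card : ℤ)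
        = (if S.card * n ≤ T then ((T - S.card * n + (m - 1)).choose (m - 1) : ℤ) else 0) := by
    intro S
    by_cases h : S.card * n ≤ T
    · rw [if_pos h, hA, shift_card m n T S h, sb_card]
      have e1 : T - S.card * n + m - 1 = T - S.card * n + (m - 1) := by omega
      have hsym := Nat.choose_symm (show m - 1 ≤ T - S.card * n + (m - 1) by omega)
      have e2 : T - S.card * n + (m - 1) - (m - 1) = T - S.card * n := by omega
      rw [e2] at hsym
      rw [e1, hsym]
    · rw [if_neg h, hA, shift_empty m n T S (by omega)]
      simp
  have step1 : ((A.filter (fun f => ∀ i, f i < n)).card : ℤ)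
      = ∑ f ∈ A, (if ∀ i, f i < n then (1 : ℤ) else 0) := by
    rw [Finset.card_filter]
    push_cast
    rfl
  rw [step1]
  have step2 : ∀ f ∈ A, (if ∀ i, f i < n then (1 : ℤ) else 0)
      = ∑ S ∈ (univ : Finset (Fin m)).powerset,
          (if S ⊆ univ.filter (fun i => n ≤ f i) then (-1 : ℤ) ^ S.card else 0) := by
    intro f _
    rw [← Finset.sum_filter]
    have : Finset.filter (· ⊆ univ.filter (fun i => n ≤ f i))
        (univ : Finset (Fin m)).powerset = (univ.filter (fun i => n ≤ f i)).powerset := by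
      ext S
      simp [Finset.mem_powerset]
    rw [this, Finset.sum_powerset_neg_one_pow_card]
    refine if_congr ?_ rfl rfl
    simp [Finset.filter_eq_empty_iff, not_le]
  rw [Finset.sum_congr rfl step2, Finset.sum_comm]
  have step3 : ∀ S ∈ (univ : Finset (Fin m)).powerset,
      (∑ f ∈ A, if S ⊆ univ.filter (fun i => n ≤ f i) then (-1 : ℤ) ^ S.card else 0)
        = (-1 : ℤ) ^ S.card *
          (if S.card * n ≤ T then ((T - S.card * n + (m - 1)).choose (m - 1) : ℤ) else 0) := by
    intro S _
    rw [← Finset.sum_filter]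
    have hiff : A.filter (fun f => S ⊆ univ.filter (fun i => n ≤ f i))
        = A.filter (fun f => ∀ i ∈ S, n ≤ f i) := by
      apply Finset.filter_congr
      intro f _
      simp [Finset.subset_iff]
    rw [hiff, Finset.sum_const, nsmul_eq_mul, Nterm S, mul_comm]
  rw [Finset.sum_congr rfl step3, Finset.sum_powerset_apply_card
    (fun j => (-1 : ℤ) ^ j * (if j * n ≤ T then ((T - j * n + (m - 1)).choose (m - 1) : ℤ) else 0))]
  rw [Finset.card_univ, Fintype.card_fin]
  refine Finset.sum_congr rfl fun j _ => ?_
  rw [nsmul_eq_mul]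
  ring
private def flip2 (n m : ℕ) (t : Fin m → Fin n) : Fin m → Fin n :=
  fun k => if (k : ℕ) % 2 = 0 then (t k).rev else t k

private lemma flip2_flip2 (n m : ℕ) (t : Fin m → Fin n) : flip2 n m (flip2 n m t) = t := by
  funext k
  unfold flip2
  by_cases hk : (k : ℕ) % 2 = 0 <;> simp [hk]

private lemma parity_sum (p : ℕ) (a b : ℤ) :
    (∑ k : Fin (2 * p), if (k : ℕ) % 2 = 0 then a else b) = p * a + p * b := by
  rw [Fin.sum_univ_eq_sum_range (fun k => if k % 2 = 0 then a else b)]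
  induction p with
  | zero => simp
  | succ p ih =>
      rw [show 2 * (p + 1) = 2 * p + 1 + 1 by ring, Finset.sum_range_succ,
        Finset.sum_range_succ, ih]
      have h1 : (2 * p) % 2 = 0 := by omega
      have h2 : (2 * p + 1) % 2 = 1 := by omega
      rw [h1, h2]
      norm_num
      push_cast
      ring

private lemma flip2_key (n p : ℕ) (t : Fin (2 * p) → Fin n) :
    (∑ k : Fin (2 * p), ((flip2 n (2 * p) t k : ℕ) : ℤ))
      = (∑ k : Fin (2 * p), (-1 : ℤ) ^ ((k : ℕ) + 1) * ((t k : ℕ) + 1)) + ((p : ℤ) * n - p) := by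
  have h : (∑ k : Fin (2 * p), ((flip2 n (2 * p) t k : ℕ) : ℤ))
      - (∑ k : Fin (2 * p), (-1 : ℤ) ^ ((k : ℕ) + 1) * ((t k : ℕ) + 1))
      = (p : ℤ) * n + p * (-1) := by
    rw [← Finset.sum_sub_distrib]
    rw [Finset.sum_congr rfl (fun k _ => ?_), parity_sum p (n : ℤ) (-1)]
    show ((flip2 n (2 * p) t k : ℕ) : ℤ) - (-1 : ℤ) ^ ((k : ℕ) + 1) * ((t k : ℕ) + 1)
        = if (k : ℕ) % 2 = 0 then (n : ℤ) else -1
    have hlt : ((t k : ℕ) : ℤ) + 1 ≤ n := by exact_mod_cast (t k).is_lt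
    unfold flip2
    rcases Nat.even_or_odd (k : ℕ) with he | ho
    · have hk : (k : ℕ) % 2 = 0 := Nat.even_iff.mp he
      have hpow : (-1 : ℤ) ^ ((k : ℕ) + 1) = -1 := by
        rw [pow_succ, Even.neg_one_pow he]; ring
      have hrev : (((t k).rev : ℕ) : ℤ) = (n : ℤ) - ((t k : ℕ) + 1) := by
        rw [Fin.val_rev, Nat.cast_sub (t k).is_lt]
        push_cast
        ring
      rw [if_pos hk, if_pos hk, hpow, hrev]
      ring
    · have hk : ¬ (k : ℕ) % 2 = 0 := by
        rw [Nat.odd_iff] at ho; omega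
      have hpow : (-1 : ℤ) ^ ((k : ℕ) + 1) = 1 := by
        rw [pow_succ, Odd.neg_one_pow ho]; ring
      rw [if_neg hk, if_neg hk, hpow]
      ring
  linarith

private lemma bridge (m n T : ℕ) :
    (Finset.univ.filter
        (fun t : Fin m → Fin n => (∑ k : Fin m, ((t k : ℕ) : ℤ)) = (T : ℤ))).card
      = ((Finset.piAntidiag (univ : Finset (Fin m)) T).filter
          (fun f => ∀ i, f i < n)).card := by
  classical
  refine Finset.card_bij' (fun t _ => fun k => (t k : ℕ))
    (fun f hf => fun k => ⟨f k, ?_⟩) ?_ ?_ ?_ ?_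
  · simp only [Finset.mem_filter] at hf
    exact hf.2 k
  · intro t ht
    simp only [Finset.mem_filter, Finset.mem_univ, true_and] at ht
    simp only [Finset.mem_filter, Finset.mem_piAntidiag]
    refine ⟨⟨?_, fun i _ => Finset.mem_univ i⟩, fun i => (t i).is_lt⟩
    exact_mod_cast ht
  · intro f hf
    simp only [Finset.mem_filter, Finset.mem_piAntidiag] at hf
    simp only [Finset.mem_filter, Finset.mem_univ, true_and]
    exact_mod_cast hf.1.1
  · intro t _
    funext k
    rfl
  · intro f _
    rfl
/-- Cardinality of the set of `2p`-tuples in `{1,…,n}` with alternating sum `s*n`. -/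
theorem stmt_1 (n p : ℕ) (s : ℤ) (hn : 0 < n) (hp : 0 < p)
    (hs1 : -((p : ℤ) - 1) ≤ s) (hs2 : s ≤ (p : ℤ) - 1) :
    ((Finset.univ.filter
        (fun t : Fin (2 * p) → Fin n =>
          ∑ k : Fin (2 * p), (-1 : ℤ) ^ ((k : ℕ) + 1) * ((t k : ℕ) + 1) = s * n)).card : ℤ) =
      ∑ k ∈ Finset.range ((p : ℤ) + s).toNat,
        (-1 : ℤ) ^ k * ((2 * p).choose k) *
          (((((p : ℤ) + s).toNat - k) * n + p - 1).choose (2 * p - 1)) := by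
  classical
  set q : ℕ := ((p : ℤ) + s).toNat with hqdef
  have hq : ((p : ℤ) + s) = (q : ℤ) := (Int.toNat_of_nonneg (by omega)).symm
  have hq1 : 1 ≤ q := by omega
  have hq2 : q ≤ 2 * p - 1 := by omega
  -- Step 1: flip the even coordinates to turn the alternating sum into a plain sum.
  have step1 : (Finset.univ.filter
      (fun t : Fin (2 * p) → Fin n =>
        ∑ k : Fin (2 * p), (-1 : ℤ) ^ ((k : ℕ) + 1) * ((t k : ℕ) + 1) = s * n)).card
      = (Finset.univ.filter
        (fun t : Fin (2 * p) → Fin n =>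
          (∑ k : Fin (2 * p), ((t k : ℕ) : ℤ)) = (q : ℤ) * n - p)).card := by
    refine Finset.card_nbij' (fun t => flip2 n (2 * p) t) (fun t => flip2 n (2 * p) t)
      ?_ ?_ (fun t _ => flip2_flip2 n (2 * p) t) (fun t _ => flip2_flip2 n (2 * p) t)
    · intro t ht
      simp only [Finset.mem_coe, Finset.mem_filter, Finset.mem_univ, true_and] at ht ⊢
      rw [flip2_key n p t, ht, ← hq]
      ring
    · intro t ht
      simp only [Finset.mem_coe, Finset.mem_filter, Finset.mem_univ, true_and] at ht ⊢
      have h := flip2_key n p (flip2 n (2 * p) t)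
      rw [flip2_flip2 n (2 * p) t, ht, ← hq] at h
      linarith
  rw [step1]
  clear step1
  by_cases hT : (p : ℕ) ≤ q * n
  · -- nonnegative target
    set Tn : ℕ := q * n - p with hTndef
    have hTn : (Tn : ℤ) = (q : ℤ) * n - p := by
      push_cast [hTndef]
      omega
    have e1 : (Finset.univ.filter
        (fun t : Fin (2 * p) → Fin n =>
          (∑ k : Fin (2 * p), ((t k : ℕ) : ℤ)) = (q : ℤ) * n - p)).card
        = (Finset.univ.filter
          (fun t : Fin (2 * p) → Fin n =>
            (∑ k : Fin (2 * p), ((t k : ℕ) : ℤ)) = (Tn : ℤ))).card := by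
      congr 1
      apply Finset.filter_congr
      intro t _
      rw [hTn]
    rw [e1]
    clear e1
    rw [bridge (2 * p) n Tn, count_bounded (2 * p) n Tn (by omega)]
    rw [← Finset.sum_subset (Finset.range_subset_range.mpr (show q ≤ 2 * p + 1 by omega))]
    · refine Finset.sum_congr rfl fun k hk => ?_
      rw [Finset.mem_range] at hk
      have e : q * n = k * n + (q - k) * n := by
        rw [← Nat.add_mul]
        congr 1
        omega
      by_cases hkn : k * n ≤ Tn
      · rw [if_pos hkn]
        have : Tn - k * n + (2 * p - 1) = (q - k) * n + p - 1 := by omega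
        rw [this]
      · rw [if_neg hkn]
        have hlt : (q - k) * n + p - 1 < 2 * p - 1 := by omega
        rw [Nat.choose_eq_zero_of_lt hlt]
        simp
    · intro k hk hk2
      rw [Finset.mem_range] at hk hk2
      have hqk : q ≤ k := by omega
      have : q * n ≤ k * n := Nat.mul_le_mul_right n hqk
      have hkn : ¬ k * n ≤ Tn := by omega
      rw [if_neg hkn]
      ring
  · -- negative target : both sides vanish
    have hempty : (Finset.univ.filter
        (fun t : Fin (2 * p) → Fin n =>
          (∑ k : Fin (2 * p), ((t k : ℕ) : ℤ)) = (q : ℤ) * n - p)).card = 0 := by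
      rw [Finset.card_eq_zero, Finset.filter_eq_empty_iff]
      intro t _
      have h1 : (0 : ℤ) ≤ ∑ k : Fin (2 * p), ((t k : ℕ) : ℤ) :=
        Finset.sum_nonneg fun k _ => by positivity
      have h2 : (q : ℤ) * n - p < 0 := by
        have : (q : ℤ) * n < p := by exact_mod_cast Nat.lt_of_not_le hT
        omega
      omega
    rw [hempty]
    clear hempty
    symm
    push_cast
    apply Finset.sum_eq_zero
    intro k hk
    rw [Finset.mem_range] at hk
    have h3 : (q - k) * n ≤ q * n := Nat.mul_le_mul_right n (by omega)
    have hlt : (q - k) * n + p - 1 < 2 * p - 1 := by omega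
    rw [Nat.choose_eq_zero_of_lt hlt]
    simp
end

section
/- Let $X_1,\ldots,X_n$ be independent standard normal random variables, and let $\alpha_1,\ldots,\alpha_n$ and $\beta_1,\ldots,\beta_n$ be nonnegative integers. Then the covariance of the random variables $\prod_{i=1}^n X_i^{\alpha_i}$ and $\prod_{i=1}^n X_i^{\beta_i}$ is nonnegative, i.e., $E\big[\prod_i X_i^{\alpha_i+\beta_i}\big] \ge \prod_i E[X_i^{\alpha_i}] \cdot \prod_i E[X_i^{\beta_i}]$. -/
open ProbabilityTheory MeasureTheory Real

namespace Stmt3Aux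

lemma integrable_pow_gaussian (k : ℕ) :
    Integrable (fun x : ℝ => x ^ k) (gaussianReal 0 1) := by
  rw [gaussianReal_of_var_ne_zero 0 one_ne_zero,
    integrable_withDensity_iff (measurable_gaussianPDF 0 1)
      (Filter.Eventually.of_forall fun x => ENNReal.ofReal_lt_top)]
  have h := integrable_rpow_mul_exp_neg_mul_sq (b := 2⁻¹) (by norm_num) (s := (k : ℝ))
    (lt_of_lt_of_le neg_one_lt_zero (Nat.cast_nonneg k))
  simp only [rpow_natCast] at h
  have heq : (fun x : ℝ => x ^ k * (gaussianPDF 0 1 x).toReal)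
      = fun x => (Real.sqrt (2 * π * 1))⁻¹ * (x ^ k * exp (-2⁻¹ * x ^ 2)) := by
    funext x
    rw [gaussianPDF, ENNReal.toReal_ofReal (gaussianPDFReal_nonneg 0 1 x),
      gaussianPDFReal]
    have : -(x - 0) ^ 2 / (2 * (1 : NNReal)) = -2⁻¹ * x ^ 2 := by
      push_cast; ring
    rw [this]; push_cast; ring_nf
  rw [heq]
  exact h.const_mul _

lemma odd_moment (k : ℕ) (hk : Odd k) :
    ∫ x, x ^ k ∂(gaussianReal 0 1) = 0 := by
  have hmap : (gaussianReal 0 1).map (fun x : ℝ => -1 * x) = gaussianReal 0 1 := by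
    rw [gaussianReal_map_const_mul (-1)]
    norm_num
  have h1 : ∫ x, x ^ k ∂(gaussianReal 0 1)
      = ∫ x, (-1 * x) ^ k ∂(gaussianReal 0 1) := by
    conv_lhs => rw [← hmap]
    rw [integral_map (by fun_prop) (by fun_prop)]
  have h2 : ∫ x, (-1 * x) ^ k ∂(gaussianReal 0 1)
      = - ∫ x, x ^ k ∂(gaussianReal 0 1) := by
    simp_rw [mul_pow, hk.neg_one_pow, neg_one_mul]
    exact integral_neg _
  linarith [h1, h2]

lemma even_moment_nonneg (k : ℕ) (hk : Even k) :
    0 ≤ ∫ x, x ^ k ∂(gaussianReal 0 1) :=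
  integral_nonneg fun x => hk.pow_nonneg x

lemma moment_mul_nonneg (a b : ℕ) :
    0 ≤ (∫ x, x ^ a ∂(gaussianReal 0 1)) * ∫ x, x ^ b ∂(gaussianReal 0 1) := by
  rcases Nat.even_or_odd a with ha | ha
  · rcases Nat.even_or_odd b with hb | hb
    · exact mul_nonneg (even_moment_nonneg a ha) (even_moment_nonneg b hb)
    · rw [odd_moment b hb, mul_zero]
  · rw [odd_moment a ha, zero_mul]

lemma moment_mul_le (a b : ℕ) :
    (∫ x, x ^ a ∂(gaussianReal 0 1)) * (∫ x, x ^ b ∂(gaussianReal 0 1))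
      ≤ ∫ x, x ^ (a + b) ∂(gaussianReal 0 1) := by
  have hμ : gaussianReal 0 1 = gaussianReal 0 1 := rfl
  set μ := gaussianReal 0 1 with hμ2
  rcases Nat.even_or_odd a with ha | ha
  · rcases Nat.even_or_odd b with hb | hb
    · -- both even: Chebyshev via double integral
      have key : 0 ≤ ∫ y, ∫ x, (x ^ a - y ^ a) * (x ^ b - y ^ b) ∂μ ∂μ := by
        refine integral_nonneg fun y => integral_nonneg fun x => ?_
        show (0:ℝ) ≤ (x ^ a - y ^ a) * (x ^ b - y ^ b)
        rcases le_total (|x|) (|y|) with h | h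
        · have h1 : x ^ a ≤ y ^ a := by
            rw [← ha.pow_abs x, ← ha.pow_abs y]; exact pow_le_pow_left₀ (abs_nonneg _) h a
          have h2 : x ^ b ≤ y ^ b := by
            rw [← hb.pow_abs x, ← hb.pow_abs y]; exact pow_le_pow_left₀ (abs_nonneg _) h b
          nlinarith
        · have h1 : y ^ a ≤ x ^ a := by
            rw [← ha.pow_abs x, ← ha.pow_abs y]; exact pow_le_pow_left₀ (abs_nonneg _) h a
          have h2 : y ^ b ≤ x ^ b := by
            rw [← hb.pow_abs x, ← hb.pow_abs y]; exact pow_le_pow_left₀ (abs_nonneg _) h b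
          exact mul_nonneg (by linarith) (by linarith)
      have inner : ∀ y : ℝ, ∫ x, (x ^ a - y ^ a) * (x ^ b - y ^ b) ∂μ
          = (∫ x, x ^ (a + b) ∂μ) - y ^ b * (∫ x, x ^ a ∂μ)
            - y ^ a * (∫ x, x ^ b ∂μ) + y ^ (a + b) := by
        intro y
        have e : (fun x : ℝ => (x ^ a - y ^ a) * (x ^ b - y ^ b))
            = fun x => x ^ (a + b) - y ^ b * x ^ a - y ^ a * x ^ b + y ^ (a + b) := by
          funext x; rw [pow_add, pow_add]; ring
        rw [e, integral_add, integral_sub, integral_sub, integral_const_mul,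
          integral_const_mul, integral_const, probReal_univ, one_smul]
        · exact integrable_pow_gaussian _
        · exact (integrable_pow_gaussian a).const_mul _
        · exact ((integrable_pow_gaussian _).sub
            ((integrable_pow_gaussian a).const_mul _))
        · exact (integrable_pow_gaussian b).const_mul _
        · exact (((integrable_pow_gaussian _).sub
            ((integrable_pow_gaussian a).const_mul _)).sub
            ((integrable_pow_gaussian b).const_mul _))
        · exact integrable_const _
      have outer : ∫ y, ∫ x, (x ^ a - y ^ a) * (x ^ b - y ^ b) ∂μ ∂μ
          = 2 * ((∫ x, x ^ (a + b) ∂μ) - (∫ x, x ^ a ∂μ) * (∫ x, x ^ b ∂μ)) := by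
        simp_rw [inner]
        rw [integral_add, integral_sub, integral_sub, integral_const, integral_mul_const,
          integral_mul_const, probReal_univ, one_smul]
        · ring
        · exact integrable_const _
        · exact (integrable_pow_gaussian b).mul_const _
        · exact (integrable_const _).sub ((integrable_pow_gaussian b).mul_const _)
        · exact (integrable_pow_gaussian a).mul_const _
        · exact (((integrable_const _).sub ((integrable_pow_gaussian b).mul_const _)).sub
            ((integrable_pow_gaussian a).mul_const _))
        · exact integrable_pow_gaussian _
      rw [outer] at key
      linarith
    · -- a even, b odd: a + b odd
      rw [odd_moment b hb, mul_zero, odd_moment (a + b) (ha.add_odd hb)]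
  · rcases Nat.even_or_odd b with hb | hb
    · rw [odd_moment a ha, zero_mul, odd_moment (a + b) (ha.add_even hb)]
    · rw [odd_moment a ha, zero_mul]
      exact even_moment_nonneg (a + b) (ha.add_odd hb)

lemma pi_integral (n : ℕ) (γ : Fin n → ℕ) :
    (∫ x, ∏ i, (x i) ^ (γ i) ∂(Measure.pi fun _ : Fin n => gaussianReal 0 1))
      = ∏ i, ∫ x, x ^ γ i ∂(gaussianReal 0 1) := by
  letI : MeasureSpace ℝ := ⟨gaussianReal 0 1⟩
  haveI : SigmaFinite (volume : Measure ℝ) :=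
    (inferInstance : SigmaFinite (gaussianReal 0 1))
  rw [show (Measure.pi fun _ : Fin n => gaussianReal 0 1) = (volume : Measure (Fin n → ℝ)) from
    (MeasureTheory.volume_pi).symm]
  exact integral_fintype_prod_eq_prod (fun i (x : ℝ) => x ^ γ i)

end Stmt3Aux

/-- Monomials in independent standard normals are positively correlated. -/
theorem stmt_3 (n : ℕ) (α β : Fin n → ℕ) :
    (∫ x, ∏ i, (x i) ^ (α i) ∂(Measure.pi fun _ : Fin n => gaussianReal 0 1)) *
      (∫ x, ∏ i, (x i) ^ (β i) ∂(Measure.pi fun _ : Fin n => gaussianReal 0 1)) ≤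
      ∫ x, ∏ i, (x i) ^ (α i + β i) ∂(Measure.pi fun _ : Fin n => gaussianReal 0 1) := by
  rw [Stmt3Aux.pi_integral n α, Stmt3Aux.pi_integral n β, Stmt3Aux.pi_integral n (fun i => α i + β i),
    ← Finset.prod_mul_distrib]
  exact Finset.prod_le_prod (fun i _ => Stmt3Aux.moment_mul_nonneg (α i) (β i))
    (fun i _ => Stmt3Aux.moment_mul_le (α i) (β i))
end

section
/- Fix a positive integer $p$ and for each $n$ let $A_{p,s}$ (for $0 \le s \le p-1$) be the set of $p$-tuples $(i_1,\ldots,i_p) \in \{0,\ldots,n-1\}^p$ with $i_1+\cdots+i_p = sn$. Then $\lim_{n\to\infty} \frac{|A_{p,s}|}{n^{p-1}} = \frac{1}{(p-1)!}\sum_{k=0}^{s}(-1)^k\binom{p}{k}(s-k)^{p-1} = f_p(s)$, where $f_p$ is the Irwin–Hall density of the sum of $p$ i.i.d. uniform $[0,1]$ random variables. -/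
open Finset Filter



lemma mem_inf_finset {α ι : Type*} [Fintype α] [DecidableEq α] {s : Finset ι} {f : ι → Finset α}
    {a : α} : a ∈ s.inf f ↔ ∀ i ∈ s, a ∈ f i := by
  induction s using Finset.cons_induction with
  | empty => simp
  | cons i s h ih => rw [Finset.inf_cons, Finset.inf_eq_inter, Finset.mem_inter]; simp [ih]


lemma cardAT (q : ℕ) : ∀ m : ℕ, (Finset.Nat.antidiagonalTuple (q+1) m).card = (m+q).choose q := by
  induction q with
  | zero => intro m; simp [Finset.Nat.antidiagonalTuple_one]
  | succ q ih =>
    intro m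
    have key : (Finset.Nat.antidiagonalTuple (q+2) m).card
        = ∑ v ∈ Finset.range (m+1), ((Finset.Nat.antidiagonalTuple (q+2) m).filter
            (fun f => f 0 = v)).card := by
      apply Finset.card_eq_sum_card_fiberwise
      intro f hf
      rw [Finset.mem_coe, Finset.Nat.mem_antidiagonalTuple] at hf
      simp only [Finset.mem_coe, Finset.mem_range]
      have : f 0 ≤ m := hf ▸ Finset.single_le_sum (fun i _ => Nat.zero_le (f i)) (Finset.mem_univ 0)
      omega
    have fib : ∀ v ∈ Finset.range (m+1), ((Finset.Nat.antidiagonalTuple (q+2) m).filter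
        (fun f => f 0 = v)).card = (Finset.Nat.antidiagonalTuple (q+1) (m - v)).card := by
      clear key
      intro v hv
      rw [Finset.mem_range] at hv
      refine Finset.card_nbij' Fin.tail (fun g => (Fin.cons v g : Fin (q+2) → ℕ)) ?_ ?_ ?_ ?_
      · intro f hf
        simp only [Finset.mem_coe, Finset.mem_filter, Finset.Nat.mem_antidiagonalTuple] at hf
        rw [Finset.mem_coe, Finset.Nat.mem_antidiagonalTuple]
        obtain ⟨h1, h2⟩ := hf
        rw [Fin.sum_univ_succ] at h1
        have h3 : ∑ i : Fin (q+1), Fin.tail f i = ∑ i : Fin (q+1), f i.succ := rfl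
        rw [h3]
        omega
      · intro g hg
        rw [Finset.mem_coe, Finset.Nat.mem_antidiagonalTuple, Fin.sum_univ_succ] at hg
        simp only [Finset.mem_coe, Finset.mem_filter, Finset.Nat.mem_antidiagonalTuple, Fin.sum_univ_succ,
          Fin.cons_zero, Fin.cons_succ]
        exact ⟨by omega, trivial⟩
      · intro f hf
        simp only [Finset.mem_coe, Finset.mem_filter] at hf
        rw [← hf.2]
        exact Fin.cons_self_tail f
      · intro g _
        exact Fin.tail_cons _ _
    rw [key, Finset.sum_congr rfl fib]
    have h3 : ∀ v ∈ Finset.range (m+1), (Finset.Nat.antidiagonalTuple (q+1) (m-v)).card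
        = (m - v + q).choose q := fun v _ => ih (m - v)
    rw [Finset.sum_congr rfl h3, ← Finset.sum_range_reflect]
    have h4 : ∀ j ∈ Finset.range (m+1), (m - (m + 1 - 1 - j) + q).choose q = (j + q).choose q := by
      clear key fib h3
      intro j hj; rw [Finset.mem_range] at hj
      have hjj : m - (m + 1 - 1 - j) = j := by omega
      rw [hjj]
    rw [Finset.sum_congr rfl h4, Nat.sum_range_add_choose, add_assoc]


lemma innerCard (q s n : ℕ) (hn : 1 ≤ n) (t : Finset (Fin (q+1))) :
    ((t.inf (fun i => Finset.univ.filter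
        (fun a : Fin (q+1) → Fin (s*n+1) => n ≤ (a i : ℕ)))).filter
      (fun a => ∑ k, (a k : ℕ) = s*n)).card
    = if t.card ≤ s then (((s - t.card)*n + q).choose q) else 0 := by
  classical
  have hmemInf : ∀ a : Fin (q+1) → Fin (s*n+1),
      (a ∈ t.inf (fun i => Finset.univ.filter
        (fun a : Fin (q+1) → Fin (s*n+1) => n ≤ (a i : ℕ)))) ↔ ∀ i ∈ t, n ≤ (a i : ℕ) := by
    intro a
    rw [mem_inf_finset]
    simp
  by_cases hts : t.card ≤ s
  · rw [if_pos hts, ← cardAT q ((s - t.card) * n)]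
    have hsumc : ∑ i : Fin (q+1), (if i ∈ t then n else 0) = t.card * n := by
      rw [Finset.sum_ite_mem, Finset.univ_inter, Finset.sum_const, smul_eq_mul]
    refine Finset.card_bij'
      (fun a ha i => (a i : ℕ) - (if i ∈ t then n else 0))
      (fun g hg i => (⟨g i + (if i ∈ t then n else 0), ?_⟩ : Fin (s*n+1))) ?_ ?_ ?_ ?_
    · -- bound for inverse map
      rw [Finset.Nat.mem_antidiagonalTuple] at hg
      have hgi : g i ≤ (s - t.card) * n :=
        hg ▸ Finset.single_le_sum (f := fun k => g k) (fun i _ => Nat.zero_le _)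
          (Finset.mem_univ i)
      by_cases hit : i ∈ t
      · rw [if_pos hit]
        have h1 : 1 ≤ t.card := Finset.card_pos.2 ⟨i, hit⟩
        have h2 : (s - t.card) + 1 ≤ s := by omega
        have h3 : ((s - t.card) + 1) * n ≤ s * n := Nat.mul_le_mul_right n h2
        have h4 : (s - t.card) * n + n = ((s - t.card) + 1) * n := by ring
        omega
      · rw [if_neg hit]
        have h3 : (s - t.card) * n ≤ s * n := Nat.mul_le_mul_right n (by omega)
        omega
    · -- forward maps into antidiagonalTuple
      intro a ha
      rw [Finset.mem_filter, hmemInf] at ha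
      obtain ⟨hmem, hsum'⟩ := ha
      rw [Finset.Nat.mem_antidiagonalTuple]
      have hsub : ∀ i ∈ Finset.univ (α := Fin (q+1)),
          (if i ∈ t then n else 0) ≤ (a i : ℕ) := by
        intro i _
        by_cases hit : i ∈ t
        · rw [if_pos hit]; exact hmem i hit
        · rw [if_neg hit]; exact Nat.zero_le _
      rw [Finset.sum_tsub_distrib Finset.univ hsub, hsum', hsumc, Nat.sub_mul]
    · -- inverse maps into filter
      intro g hg
      rw [Finset.Nat.mem_antidiagonalTuple] at hg
      rw [Finset.mem_filter, hmemInf]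
      constructor
      · intro i hit
        simp only [Fin.val_mk, if_pos hit]
        omega
      · simp only [Fin.val_mk]
        rw [Finset.sum_add_distrib, hg, hsumc, Nat.sub_mul]
        have h5 : t.card * n ≤ s * n := Nat.mul_le_mul_right n hts
        omega
    · intro a ha
      rw [Finset.mem_filter, hmemInf] at ha
      funext i
      apply Fin.ext
      show ((a i : ℕ) - (if i ∈ t then n else 0)) + (if i ∈ t then n else 0) = (a i : ℕ)
      by_cases hit : i ∈ t
      · have := ha.1 i hit
        simp only [if_pos hit]
        omega
      · simp [if_neg hit]
    · intro g hg
      funext i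
      show (g i + (if i ∈ t then n else 0)) - (if i ∈ t then n else 0) = g i
      omega
  · rw [if_neg hts]
    rw [Finset.card_eq_zero, Finset.filter_eq_empty_iff]
    intro a hmem
    rw [hmemInf] at hmem
    have h1 : t.card * n ≤ ∑ i ∈ t, (a i : ℕ) := by
      calc t.card * n = ∑ _i ∈ t, n := by rw [Finset.sum_const, smul_eq_mul]
      _ ≤ ∑ i ∈ t, (a i : ℕ) := Finset.sum_le_sum hmem
    have h2 : ∑ i ∈ t, (a i : ℕ) ≤ ∑ k, (a k : ℕ) :=
      Finset.sum_le_sum_of_subset (Finset.subset_univ t)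
    have h3 : (s+1) * n ≤ t.card * n := Nat.mul_le_mul_right n (by omega)
    have h4 : (s+1) * n = s * n + n := by ring
    omega

lemma count_eq (q s n : ℕ) (hn : 1 ≤ n) (hs : s ≤ q) :
    ((Finset.univ.filter (fun t : Fin (q+1) → Fin n => ∑ k, (t k : ℕ) = s * n)).card : ℤ)
      = ∑ k ∈ Finset.range (s+1),
          (-1:ℤ)^k * ((q+1).choose k) * (((s-k)*n + q).choose q) := by
  classical
  set S : Fin (q+1) → Finset (Fin (q+1) → Fin (s*n+1)) :=
    fun i => Finset.univ.filter (fun a => n ≤ (a i : ℕ)) with hS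
  set f : (Fin (q+1) → Fin (s*n+1)) → ℤ := fun a => if ∑ k, (a k : ℕ) = s*n then 1 else 0 with hf
  -- step 1 : transfer card
  have step1 : (Finset.univ.filter (fun t : Fin (q+1) → Fin n => ∑ k, (t k : ℕ) = s*n)).card
      = (Finset.univ.filter (fun a : Fin (q+1) → Fin (s*n+1) =>
          (∑ k, (a k : ℕ) = s*n) ∧ ∀ i, (a i : ℕ) < n)).card := by
    refine Finset.card_bij' (fun t ht j => (⟨(t j : ℕ), ?_⟩ : Fin (s*n+1)))
      (fun a ha j => (⟨(a j : ℕ), ?_⟩ : Fin n)) ?_ ?_ ?_ ?_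
    · rw [Finset.mem_filter] at ht
      have h1 : (t j : ℕ) ≤ ∑ k, (t k : ℕ) :=
        Finset.single_le_sum (f := fun k => (t k : ℕ)) (fun i _ => Nat.zero_le _)
          (Finset.mem_univ j)
      omega
    · rw [Finset.mem_filter] at ha
      exact ha.2.2 j
    · intro t ht
      rw [Finset.mem_filter] at ht ⊢
      refine ⟨Finset.mem_univ _, ?_, fun i => (t i).2⟩
      simpa using ht.2
    · intro a ha
      rw [Finset.mem_filter] at ha ⊢
      refine ⟨Finset.mem_univ _, ?_⟩
      simpa using ha.2.1
    · intro t ht; funext j; apply Fin.ext; rfl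
    · intro a ha; funext j; apply Fin.ext; rfl
  -- inclusion exclusion
  have IE := Finset.inclusion_exclusion_sum_inf_compl (G := ℤ) Finset.univ S f
  -- LHS of IE
  have lhs : ∑ a ∈ Finset.univ.inf (fun i => (S i)ᶜ), f a
      = ((Finset.univ.filter (fun a : Fin (q+1) → Fin (s*n+1) =>
          (∑ k, (a k : ℕ) = s*n) ∧ ∀ i, (a i : ℕ) < n)).card : ℤ) := by
    have hset : Finset.univ.inf (fun i => (S i)ᶜ)
        = Finset.univ.filter (fun a : Fin (q+1) → Fin (s*n+1) => ∀ i, (a i : ℕ) < n) := by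
      ext a
      simp only [mem_inf_finset, Finset.mem_compl, hS, Finset.mem_filter, Finset.mem_univ,
        true_and, not_le]
      tauto
    have hmerge : Finset.univ.filter (fun a : Fin (q+1) → Fin (s*n+1) =>
          (∑ k, (a k : ℕ) = s*n) ∧ ∀ i, (a i : ℕ) < n)
        = (Finset.univ.filter (fun a : Fin (q+1) → Fin (s*n+1) => ∀ i, (a i : ℕ) < n)).filter
            (fun a => ∑ k, (a k : ℕ) = s*n) := by
      rw [Finset.filter_filter]
      ext a
      simp only [Finset.mem_filter]
      tauto
    rw [hset, hf, hmerge, Finset.sum_boole]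
  -- inner sums
  have inner : ∀ t : Finset (Fin (q+1)), ∑ a ∈ t.inf S, f a
      = (fun k : ℕ => if k ≤ s then ((((s - k)*n + q).choose q : ℕ) : ℤ) else 0) t.card := by
    intro t
    have hsum : ∑ a ∈ t.inf S, f a
        = (((t.inf S).filter (fun a => ∑ k, (a k : ℕ) = s*n)).card : ℤ) := by
      rw [hf, Finset.sum_boole]
    rw [hsum, hS, innerCard q s n hn t, apply_ite (fun x : ℕ => (x : ℤ))]
    norm_num
  -- assemble
  rw [step1, ← lhs, IE]
  have hsummand : ∀ t ∈ Finset.univ.powerset (α := Fin (q+1)),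
      (-1:ℤ) ^ t.card • ∑ a ∈ t.inf S, f a
      = (fun k : ℕ => (-1:ℤ)^k * (if k ≤ s then ((((s - k)*n + q).choose q : ℕ) : ℤ) else 0))
          t.card := by
    intro t _
    rw [inner t]
    simp [zsmul_eq_mul]
  have hpc := Finset.sum_powerset_apply_card
    (f := fun k : ℕ => (-1:ℤ)^k * if k ≤ s then ((((s - k)*n + q).choose q : ℕ):ℤ) else 0)
    (x := (Finset.univ : Finset (Fin (q+1))))
  rw [Finset.sum_congr rfl hsummand, hpc, Finset.card_univ, Fintype.card_fin]
  have h1 : Finset.range (s+1) ⊆ Finset.range (q+1+1) :=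
    Finset.range_subset_range.2 (Nat.succ_le_succ (le_trans hs (Nat.le_succ q)))
  have hzero : ∀ x ∈ Finset.range (q+1+1), x ∉ Finset.range (s+1) →
      (q+1).choose x • ((-1:ℤ)^x * if x ≤ s then ((((s - x)*n + q).choose q : ℕ):ℤ) else 0)
        = 0 := by
    intro x hx hnx
    rw [Finset.mem_range, not_lt] at hnx
    rw [if_neg (fun h => absurd (le_trans hnx h) (Nat.not_succ_le_self s))]
    simp
  rw [← Finset.sum_subset h1 hzero]
  refine Finset.sum_congr rfl fun k hk => ?_
  rw [Finset.mem_range, Nat.lt_succ_iff] at hk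
  rw [if_pos hk, nsmul_eq_mul]
  try push_cast
  ring


lemma tendsto_choose_div (a q : ℕ) :
    Tendsto (fun n : ℕ => ((a*n+q).choose q : ℝ) / (n:ℝ)^q) atTop
      (nhds ((a:ℝ)^q / q.factorial)) := by
  have hq : (q.factorial : ℝ) ≠ 0 := Nat.cast_ne_zero.2 q.factorial_ne_zero
  have key : ∀ n : ℕ, 1 ≤ n → (∏ i ∈ Finset.range q, ((a:ℝ) + ((q:ℝ) - i) / n)) / q.factorial
      = ((a*n+q).choose q : ℝ) / (n:ℝ)^q := by
    intro n hn
    have hn0 : (n:ℝ) ≠ 0 := Nat.cast_ne_zero.2 (by omega)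
    have hdesc : (q.factorial * (a*n+q).choose q : ℕ) = ∏ i ∈ Finset.range q, (a*n+q-i) := by
      rw [← Nat.descFactorial_eq_factorial_mul_choose, Nat.descFactorial_eq_prod_range]
    have hcast : ((q.factorial : ℝ)) * ((a*n+q).choose q : ℝ)
        = ∏ i ∈ Finset.range q, ((a:ℝ)*n + ((q:ℝ) - i)) := by
      have h2 := congrArg (Nat.cast : ℕ → ℝ) hdesc
      push_cast at h2
      rw [h2]
      refine Finset.prod_congr rfl fun i hi => ?_
      rw [Finset.mem_range] at hi
      have hle : i ≤ a*n+q := le_trans hi.le (Nat.le_add_left q (a*n))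
      rw [Nat.cast_sub hle]
      try push_cast
      ring
    have hprod : ∏ i ∈ Finset.range q, ((a:ℝ) + ((q:ℝ) - i)/n)
        = (∏ i ∈ Finset.range q, ((a:ℝ)*n + ((q:ℝ) - i))) / (n:ℝ)^q := by
      have hstep : (∏ i ∈ Finset.range q, ((a:ℝ)*n + ((q:ℝ)-i))) / (n:ℝ)^q
          = ∏ i ∈ Finset.range q, (((a:ℝ)*n + ((q:ℝ)-i))/n) := by
        rw [Finset.prod_div_distrib, Finset.prod_const, Finset.card_range]
      rw [hstep]
      refine Finset.prod_congr rfl fun i hi => ?_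
      field_simp
    rw [hprod, ← hcast]
    field_simp
  have hlim : ∀ i ∈ Finset.range q, Tendsto (fun n : ℕ => (a:ℝ) + ((q:ℝ) - i) / n) atTop
      (nhds (a:ℝ)) := by
    intro i _
    have h0 : Tendsto (fun n : ℕ => ((q:ℝ) - i) / n) atTop (nhds 0) :=
      Tendsto.div_atTop tendsto_const_nhds tendsto_natCast_atTop_atTop
    simpa using tendsto_const_nhds.add h0
  have hprodlim : Tendsto (fun n : ℕ => (∏ i ∈ Finset.range q, ((a:ℝ) + ((q:ℝ) - i)/n))
      / q.factorial) atTop (nhds ((a:ℝ)^q / q.factorial)) := by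
    have := tendsto_finset_prod (Finset.range q) hlim
    have h3 := this.div_const (q.factorial : ℝ)
    simpa [Finset.prod_const, Finset.card_range] using h3
  refine hprodlim.congr' ?_
  filter_upwards [eventually_ge_atTop 1] with n hn
  exact key n hn


/-- The normalized count of `p`-tuples in `{0,…,n-1}` summing to `s*n` converges to the
Irwin–Hall density at `s`. -/
theorem stmt_11 (p s : ℕ) (hp : 0 < p) (hs : s ≤ p - 1) :
    Filter.Tendsto (fun n : ℕ =>
        ((Finset.univ.filter
            (fun t : Fin p → Fin n => ∑ k, (t k : ℕ) = s * n)).card : ℝ) / n ^ (p - 1))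
      Filter.atTop
      (nhds ((1 / (p - 1).factorial) *
        ∑ k ∈ Finset.range (s + 1),
          (-1 : ℝ) ^ k * (p.choose k) * ((s : ℝ) - k) ^ (p - 1))) := by
  obtain ⟨q, rfl⟩ : ∃ q, p = q + 1 := ⟨p - 1, (Nat.succ_pred_eq_of_pos hp).symm⟩
  simp only [Nat.add_sub_cancel] at hs ⊢
  -- limit of each summand
  have hterm : ∀ k ∈ Finset.range (s+1),
      Tendsto (fun n : ℕ => (-1:ℝ)^k * ((q+1).choose k) * ((((s-k)*n+q).choose q : ℝ) / (n:ℝ)^q))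
        atTop (nhds ((-1:ℝ)^k * ((q+1).choose k) * (((s-k : ℕ):ℝ)^q / q.factorial))) :=
    fun k _ => (tendsto_choose_div (s-k) q).const_mul _
  have hsumlim := tendsto_finset_sum (Finset.range (s+1)) hterm
  have hcongr : (fun n : ℕ => ∑ k ∈ Finset.range (s+1),
        (-1:ℝ)^k * ((q+1).choose k) * ((((s-k)*n+q).choose q : ℝ) / (n:ℝ)^q)) =ᶠ[atTop]
      (fun n : ℕ => ((Finset.univ.filter
          (fun t : Fin (q+1) → Fin n => ∑ k, (t k : ℕ) = s * n)).card : ℝ) / (n:ℝ)^q) := by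
    filter_upwards [eventually_ge_atTop 1] with n hn
    have hce := congrArg (Int.cast : ℤ → ℝ) (count_eq q s n hn hs)
    push_cast at hce
    rw [hce, Finset.sum_div]
    refine Finset.sum_congr rfl fun k hk => ?_
    ring
  have hfinal := hsumlim.congr' hcongr
  convert hfinal using 2
  rw [Finset.mul_sum]
  refine Finset.sum_congr rfl fun k hk => ?_
  rw [Finset.mem_range, Nat.lt_succ_iff] at hk
  rw [Nat.cast_sub hk]
  try push_cast
  ring
end

section
/- Let $RC_n$ be the $n \times n$ reverse circulant matrix with real input $X_1,\ldots,X_n$. Then for every positive integer $p$, $\operatorname{Tr}(RC_n^{2p}) = n \sum_{(i_1,\ldots,i_{2p}) \in B_{2p}} X_{i_1}\cdots X_{i_{2p}}$, where $B_{2p} = \{(i_1,\ldots,i_{2p}) \in \{1,\ldots,n\}^{2p} : \sum_{k=1}^{2p}(-1)^k i_k \equiv 0 \pmod n\}$. -/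
open Finset

lemma pow_entry (n : ℕ) [NeZero n] (X : ZMod n → ℝ) :
    ∀ (m : ℕ) (a b : ZMod n),
      ((Matrix.of fun a b : ZMod n => X (a + b - 1)) ^ m) a b =
        ∑ t ∈ Finset.univ.filter
            (fun t : Fin m → ZMod n =>
              (-1 : ZMod n) ^ m * a + ∑ k : Fin m, (-1 : ZMod n) ^ (m + (k : ℕ) + 1) * (t k + 1) = b),
          ∏ k, X (t k) := by
  intro m
  induction m with
  | zero =>
    intro a b
    simp [Matrix.one_apply, Finset.sum_filter, eq_comm]
    split <;> simp
  | succ m ih =>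
    intro a b
    rw [pow_succ', Matrix.mul_apply]
    simp only [ih, Finset.sum_filter, Finset.mul_sum, Matrix.of_apply]
    rw [← Equiv.sum_comp (Fin.consEquiv (fun _ : Fin (m+1) => ZMod n))
      (fun t' : Fin (m+1) → ZMod n =>
        if (-1 : ZMod n) ^ (m+1) * a + ∑ k : Fin (m+1), (-1 : ZMod n) ^ ((m+1) + (k : ℕ) + 1) * (t' k + 1) = b
        then ∏ k, X (t' k) else 0)]
    rw [Fintype.sum_prod_type]
    rw [← Equiv.sum_comp ((Equiv.addLeft a).trans (Equiv.subRight (1 : ZMod n)))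
      (fun x : ZMod n => ∑ t : Fin m → ZMod n,
        if (-1 : ZMod n) ^ (m+1) * a + ∑ k : Fin (m+1), (-1 : ZMod n) ^ ((m+1) + (k : ℕ) + 1) *
            ((Fin.consEquiv (fun _ : Fin (m+1) => ZMod n)) (x, t) k + 1) = b
        then ∏ k, X ((Fin.consEquiv (fun _ : Fin (m+1) => ZMod n)) (x, t) k) else 0)]
    refine Finset.sum_congr rfl fun c _ => ?_
    refine Finset.sum_congr rfl fun t _ => ?_
    simp only [Equiv.trans_apply, Equiv.coe_addLeft, Equiv.subRight_apply, Fin.consEquiv_apply]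
    have hcond : ((-1 : ZMod n) ^ (m+1) * a + ∑ k : Fin (m+1), (-1 : ZMod n) ^ ((m+1) + (k : ℕ) + 1) *
        ((Fin.cons (a + c - 1) t : Fin (m+1) → ZMod n) k + 1)) =
        ((-1 : ZMod n) ^ m * c + ∑ k : Fin m, (-1 : ZMod n) ^ (m + (k : ℕ) + 1) * (t k + 1)) := by
      rw [Fin.sum_univ_succ]
      simp only [Fin.cons_zero, Fin.cons_succ, Fin.val_succ, Fin.val_zero]
      have h1 : ∀ k : ℕ, (-1 : ZMod n) ^ (m + 1 + (k + 1) + 1) = (-1) ^ (m + k + 1) := by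
        intro k
        have : m + 1 + (k + 1) + 1 = (m + k + 1) + 2 := by omega
        rw [this, pow_add]; ring
      simp only [h1]
      have h2 : (-1 : ZMod n) ^ (m + 1 + 0 + 1) = (-1) ^ m := by
        have : m + 1 + 0 + 1 = m + 2 := by omega
        rw [this, pow_add]; ring
      rw [h2, pow_succ]
      ring
    rw [hcond]
    rw [Fin.prod_univ_succ]
    simp only [Fin.cons_zero, Fin.cons_succ]
    split <;> ring

/-- Trace formula for even powers of the reverse circulant matrix. -/
theorem stmt_14 (n : ℕ) [NeZero n] (X : ZMod n → ℝ) (p : ℕ) (hp : 0 < p) :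
    Matrix.trace ((Matrix.of fun a b : ZMod n => X (a + b - 1)) ^ (2 * p)) =
      n * ∑ t ∈ Finset.univ.filter
          (fun t : Fin (2 * p) → ZMod n =>
            ∑ k : Fin (2 * p), (-1 : ZMod n) ^ ((k : ℕ) + 1) * t k = 0),
        ∏ k, X (t k) := by
  have h2p : (-1 : ZMod n) ^ (2 * p) = 1 := (even_two_mul p).neg_one_pow
  have hpow : ∀ k : ℕ, (-1 : ZMod n) ^ (2 * p + k + 1) = (-1) ^ (k + 1) := by
    intro k
    rw [show 2 * p + k + 1 = (k + 1) + 2 * p by omega, pow_add, h2p, mul_one]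
  have hsign : ∑ k : Fin (2 * p), (-1 : ZMod n) ^ ((k : ℕ) + 1) = 0 := by
    rw [Fin.sum_univ_eq_sum_range (fun k => (-1 : ZMod n) ^ (k + 1))]
    simp only [pow_succ, ← Finset.sum_mul, neg_one_geom_sum]
    simp [even_two_mul]
  rw [Matrix.trace]
  simp only [Matrix.diag_apply, pow_entry]
  have hcond : ∀ (a : ZMod n) (t : Fin (2 * p) → ZMod n),
      ((-1 : ZMod n) ^ (2 * p) * a +
        ∑ k : Fin (2 * p), (-1 : ZMod n) ^ (2 * p + (k : ℕ) + 1) * (t k + 1) = a) ↔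
      (∑ k : Fin (2 * p), (-1 : ZMod n) ^ ((k : ℕ) + 1) * t k = 0) := by
    intro a t
    simp only [h2p, one_mul, hpow, mul_add, mul_one, Finset.sum_add_distrib, hsign, add_zero]
    rw [add_eq_left]
  have hfix : ∀ a : ZMod n,
      (Finset.univ.filter (fun t : Fin (2 * p) → ZMod n =>
        (-1 : ZMod n) ^ (2 * p) * a +
          ∑ k : Fin (2 * p), (-1 : ZMod n) ^ (2 * p + (k : ℕ) + 1) * (t k + 1) = a)) =
      (Finset.univ.filter (fun t : Fin (2 * p) → ZMod n =>
        ∑ k : Fin (2 * p), (-1 : ZMod n) ^ ((k : ℕ) + 1) * t k = 0)) := by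
    intro a
    apply Finset.filter_congr
    intro t _
    exact hcond a t
  simp only [hfix]
  rw [Finset.sum_const, Finset.card_univ, ZMod.card, nsmul_eq_mul]
end
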